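/- Let X be a real random variable such that E[X^{2l}] ≤ ∑_{r=0}^{2l−1} (1/(r+1)) C(2l,r) C(2l−1,r) y^r for all l ∈ ℕ, where y > 0. Then |X| ≤ (1+√y)² almost surely. -/
import Mathlib


open MeasureTheory Filter

lemma mp_sum_le_pow (y : ℝ) (hy : 0 ≤ y) (l : ℕ) :
    ∑ r ∈ Finset.range (2 * l),
      (1 / ((r : ℝ) + 1)) * ((2 * l).choose r) * ((2 * l - 1).choose r) * y ^ r
      ≤ ((1 + Real.sqrt y) ^ 2) ^ (2 * l) := by
  set s := Real.sqrt y with hs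
  have hs0 : (0:ℝ) ≤ s := Real.sqrt_nonneg y
  have hsq : s ^ 2 = y := Real.sq_sqrt hy
  have key : ∀ r : ℕ, (1 / ((r : ℝ) + 1)) * ((2 * l).choose r) * ((2 * l - 1).choose r) * y ^ r
      ≤ (((2 * l).choose r : ℝ) * s ^ r) ^ 2 := by
    intro r
    have h1 : (1 / ((r : ℝ) + 1)) ≤ 1 := by
      rw [div_le_one (by positivity)]; linarith [Nat.cast_nonneg (α := ℝ) r]
    have h2 : ((2 * l - 1).choose r : ℝ) ≤ ((2 * l).choose r : ℝ) := by
      exact_mod_cast Nat.choose_le_choose r (by omega)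
    have h3 : (((2 * l).choose r : ℝ) * s ^ r) ^ 2 = ((2 * l).choose r : ℝ) ^ 2 * y ^ r := by
      rw [mul_pow, ← pow_mul, mul_comm r 2, pow_mul, hsq]
    rw [h3, sq]
    have := Nat.cast_nonneg (α := ℝ) ((2 * l).choose r)
    have hyr : (0:ℝ) ≤ y ^ r := by positivity
    calc (1 / ((r : ℝ) + 1)) * ((2 * l).choose r) * ((2 * l - 1).choose r) * y ^ r
        ≤ 1 * ((2 * l).choose r) * ((2 * l).choose r) * y ^ r := by
          gcongr
      _ = ((2 * l).choose r : ℝ) * ((2 * l).choose r) * y ^ r := by ring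
  calc ∑ r ∈ Finset.range (2 * l),
      (1 / ((r : ℝ) + 1)) * ((2 * l).choose r) * ((2 * l - 1).choose r) * y ^ r
      ≤ ∑ r ∈ Finset.range (2 * l), (((2 * l).choose r : ℝ) * s ^ r) ^ 2 :=
        Finset.sum_le_sum fun r _ => key r
    _ ≤ ∑ r ∈ Finset.range (2 * l + 1), (((2 * l).choose r : ℝ) * s ^ r) ^ 2 := by
        apply Finset.sum_le_sum_of_subset_of_nonneg
        · exact Finset.range_subset_range.mpr (by omega)
        · intro i _ _; positivity
    _ ≤ (∑ r ∈ Finset.range (2 * l + 1), ((2 * l).choose r : ℝ) * s ^ r) ^ 2 :=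
        Finset.sum_sq_le_sq_sum_of_nonneg (fun i _ => by positivity)
    _ = ((s + 1) ^ (2 * l)) ^ 2 := by
        rw [add_pow]
        congr 1
        refine Finset.sum_congr rfl fun r _ => ?_
        rw [one_pow]; ring
    _ = ((1 + s) ^ 2) ^ (2 * l) := by
        rw [add_comm s 1, ← pow_mul, ← pow_mul, mul_comm (2 * l) 2]

/-- If the even moments of a real random variable X are bounded by the corresponding
moments of the Marčenko–Pastur law with parameter y > 0, then |X| ≤ (1+√y)² almost
surely. -/
theorem abs_le_of_mp_moment_bounds {Ω : Type*} [MeasurableSpace Ω]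
    (μ : Measure Ω) [IsProbabilityMeasure μ] (X : Ω → ℝ) (hX : Measurable X)
    (y : ℝ) (hy : 0 < y)
    (hint : ∀ l : ℕ, Integrable (fun ω => X ω ^ (2 * l)) μ)
    (hmom : ∀ l : ℕ, 1 ≤ l →
      (∫ ω, X ω ^ (2 * l) ∂μ) ≤
        ∑ r ∈ Finset.range (2 * l),
          (1 / ((r : ℝ) + 1)) * ((2 * l).choose r) * ((2 * l - 1).choose r) * y ^ r) :
    ∀ᵐ ω ∂μ, |X ω| ≤ (1 + Real.sqrt y) ^ 2 := by
  set t : ℝ := (1 + Real.sqrt y) ^ 2 with ht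
  have ht1 : (1:ℝ) ≤ t := by
    have := Real.sqrt_nonneg y
    nlinarith
  have ht0 : (0:ℝ) < t := by linarith
  -- moments bounded by t^(2l)
  have hmom' : ∀ l : ℕ, 1 ≤ l → (∫ ω, X ω ^ (2 * l) ∂μ) ≤ t ^ (2 * l) := fun l hl =>
    (hmom l hl).trans (mp_sum_le_pow y hy.le l)
  -- for each n, the set where |X| ≥ t + 1/(n+1) is null
  have hnull : ∀ n : ℕ, μ {ω | t + 1 / (n + 1 : ℝ) ≤ |X ω|} = 0 := by
    intro n
    set c : ℝ := t + 1 / (n + 1 : ℝ) with hc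
    have hcpos : 0 < c := by positivity
    have htc : t < c := hc ▸ lt_add_of_pos_right t (by positivity)
    have hmeas : MeasurableSet {ω | c ≤ |X ω|} := by
      exact measurableSet_le measurable_const hX.abs
    have hbound : ∀ l : ℕ, 1 ≤ l → (μ {ω | c ≤ |X ω|}).toReal ≤ (t / c) ^ (2 * l) := by
      intro l hl
      have hsub : {ω | c ≤ |X ω|} ⊆ {ω | c ^ (2 * l) ≤ X ω ^ (2 * l)} := by
        intro ω hω
        simp only [Set.mem_setOf_eq] at hω ⊢
        calc c ^ (2 * l) ≤ |X ω| ^ (2 * l) := pow_le_pow_left₀ hcpos.le hω _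
          _ = X ω ^ (2 * l) := by rw [← abs_pow, abs_of_nonneg (even_two_mul l |>.pow_nonneg _)]
      have hmk := mul_meas_ge_le_integral_of_nonneg
        (f := fun ω => X ω ^ (2 * l)) (μ := μ)
        (Filter.Eventually.of_forall fun ω => (even_two_mul l).pow_nonneg _)
        (hint l) (c ^ (2 * l))
      have hle : (μ {ω | c ≤ |X ω|}).toReal
          ≤ (μ {ω | c ^ (2 * l) ≤ X ω ^ (2 * l)}).toReal := by
        apply ENNReal.toReal_mono (measure_ne_top μ _)
        exact measure_mono hsub
      have hcp : (0:ℝ) < c ^ (2 * l) := by positivity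
      have : c ^ (2 * l) * (μ {ω | c ≤ |X ω|}).toReal ≤ t ^ (2 * l) := by
        calc c ^ (2 * l) * (μ {ω | c ≤ |X ω|}).toReal
            ≤ c ^ (2 * l) * (μ {ω | c ^ (2 * l) ≤ X ω ^ (2 * l)}).toReal := by
              gcongr
          _ ≤ ∫ ω, X ω ^ (2 * l) ∂μ := hmk
          _ ≤ t ^ (2 * l) := hmom' l hl
      rw [div_pow, le_div_iff₀ hcp, mul_comm]
      exact this
    -- (t/c)^(2l) → 0
    have hr1 : t / c < 1 := (div_lt_one hcpos).mpr htc
    have hr0 : 0 ≤ t / c := by positivity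
    have htend : Tendsto (fun l : ℕ => (t / c) ^ (2 * l)) atTop (nhds 0) := by
      have := tendsto_pow_atTop_nhds_zero_of_lt_one hr0 hr1
      exact this.comp (tendsto_atTop_mono (fun l : ℕ => Nat.le_mul_of_pos_left l two_pos) tendsto_id)
    have hzero : (μ {ω | c ≤ |X ω|}).toReal ≤ 0 :=
      ge_of_tendsto htend (eventually_atTop.mpr ⟨1, fun l hl => hbound l hl⟩)
    have : (μ {ω | c ≤ |X ω|}).toReal = 0 :=
      le_antisymm hzero ENNReal.toReal_nonneg
    rcases (ENNReal.toReal_eq_zero_iff _).mp this with h | h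
    · exact h
    · exact absurd h (measure_ne_top μ _)
  have hae : ∀ᵐ ω ∂μ, ∀ n : ℕ, |X ω| < t + 1 / (n + 1 : ℝ) := by
    rw [MeasureTheory.ae_all_iff]
    intro n
    have h := measure_eq_zero_iff_ae_notMem.mp (hnull n)
    filter_upwards [h] with ω hω
    simp only [Set.mem_setOf_eq, not_le] at hω
    exact hω
  filter_upwards [hae] with ω hω
  by_contra hlt
  push_neg at hlt
  obtain ⟨n, hn⟩ := exists_nat_one_div_lt (show (0:ℝ) < |X ω| - t by linarith)
  linarith [hω n]
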